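/- For a nonzero lattice vector z = (r,d) with r > 2, there exists a lattice point x in the open vertical strip {(a,b) : 0 < a < r} lying on the rational line L' parallel to the line L through (0,0) and z, where L' is the closest such parallel rational line strictly above L. -/

import Mathlib

/-- `detZ z x = z₁x₂ - z₂x₁`; a lattice point `x` lies strictly above the line `L`
through `0` and `z = (r,d)` (with `r > 0`) iff `detZ z x > 0`, and it lies on the
rational line `L'` parallel to `L`, strictly above `L` and closest to `L`, iff
`detZ z x = gcd(r,d)` (the minimal positive value of `r*x₂ - d*x₁`). -/
theorem exists_minimal_path (r d : ℤ) (hr : 2 < r) :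
    ∃ x : ℤ × ℤ, 0 < x.1 ∧ x.1 < r ∧ r * x.2 - d * x.1 = Int.gcd r d := by
  have hr0 : (0:ℤ) < r := by linarith
  by_cases hdvd : r ∣ d
  · obtain ⟨c, hc⟩ := id hdvd
    refine ⟨(1, 1 + c), one_pos, show (1:ℤ) < r by linarith, ?_⟩
    have hg : (Int.gcd r d : ℤ) = r := by
      exact Int.gcd_eq_left hr0.le hdvd
    rw [hg, hc]
    ring
  · set u := Int.gcdA r d with hu
    set v := Int.gcdB r d with hv
    have hbez : (Int.gcd r d : ℤ) = r * u + d * v := Int.gcd_eq_gcd_ab r d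
    have hrv : ¬ r ∣ v := by
      intro ⟨c, hc⟩
      apply hdvd
      have h1 : r ∣ (Int.gcd r d : ℤ) := by
        rw [hbez, hc]
        exact ⟨u + c * d, by ring⟩
      exact h1.trans (Int.gcd_dvd_right r d)
    set x1 : ℤ := (-v) % r with hx1
    have h1 : 0 ≤ x1 := Int.emod_nonneg _ hr0.ne'
    have h2 : x1 < r := Int.emod_lt_of_pos _ hr0
    have h0 : x1 ≠ 0 := by
      intro h
      exact hrv (by simpa using (Int.dvd_of_emod_eq_zero h).neg_right)
    set k : ℤ := -((-v) / r) with hk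
    have hx1eq : x1 = k * r - v := by
      rw [hx1, hk, Int.emod_def]; ring
    refine ⟨(x1, u + k * d), lt_of_le_of_ne h1 (Ne.symm h0), h2, ?_⟩
    simp only [hx1eq, hbez]
    ring
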